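/- arXiv:math/0608315 — 2 statements merged into one kernel-verified Lean document; each statement's English description precedes it below -/
import Mathlib

section
/- Let ν > 0 and A > 0. For analytic functions F, G on a star-shaped neighborhood Ω of [0,∞) with finite norm ‖F‖ := sup_{t∈Ω} (A+|t|)² |F(t)| e^{-ν|t|}, the convolution (F*G)(t) = ∫₀ᵗ F(q)G(t-q) dq satisfies ‖F*G‖ ≤ (C/A) ‖F‖ ‖G‖ for a universal constant C independent of A, ν, F, G. -/
open MeasureTheory Real Set

private lemma integral_inv_sq_shift (A t : ℝ) (hA : 0 < A) (ht : 0 ≤ t) :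
    ∫ q in (0:ℝ)..t, ((A + q) ^ 2)⁻¹ = A⁻¹ - (A + t)⁻¹ := by
  have hderiv : ∀ q ∈ Set.uIcc (0:ℝ) t,
      HasDerivAt (fun x : ℝ => -(A + x)⁻¹) (((A + q) ^ 2)⁻¹) q := by
    intro q hq
    rw [Set.uIcc_of_le ht] at hq
    have hq0 : 0 < A + q := by nlinarith [hq.1]
    have h1 : HasDerivAt (fun x : ℝ => A + x) 1 q := (hasDerivAt_id q).const_add A
    have h2 := (h1.inv hq0.ne').neg
    exact h2.congr_deriv (by ring)
  have hcont : IntervalIntegrable (fun q : ℝ => ((A + q) ^ 2)⁻¹) volume 0 t := by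
    apply ContinuousOn.intervalIntegrable
    apply ContinuousOn.inv₀
    · fun_prop
    · intro x hx
      rw [Set.uIcc_of_le ht] at hx
      have : 0 < A + x := by nlinarith [hx.1]
      positivity
  have := intervalIntegral.integral_eq_sub_of_hasDerivAt hderiv hcont
  rw [this]
  ring

private lemma key_kernel_bound (A t q : ℝ) (hA : 0 < A) (ht : 0 ≤ t)
    (hq0 : 0 ≤ q) (hqt : q ≤ t) :
    ((A + q) ^ 2 * (A + (t - q)) ^ 2)⁻¹
      ≤ 4 / (A + t) ^ 2 * (((A + q) ^ 2)⁻¹ + ((A + (t - q)) ^ 2)⁻¹) := by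
  have ha : 0 < A + q := by linarith
  have hb : 0 < A + (t - q) := by nlinarith
  have hAt : 0 < A + t := by linarith
  rw [div_mul_eq_mul_div, le_div_iff₀ (by positivity)]
  have h1 : ((A + q) ^ 2 * (A + (t - q)) ^ 2)⁻¹ * (A + t) ^ 2
      = (A + t) ^ 2 / ((A + q) ^ 2 * (A + (t - q)) ^ 2) := by ring
  have h2 : 4 * (((A + q) ^ 2)⁻¹ + ((A + (t - q)) ^ 2)⁻¹)
      = (4 * ((A + q) ^ 2 + (A + (t - q)) ^ 2)) / ((A + q) ^ 2 * (A + (t - q)) ^ 2) := by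
    field_simp
    ring
  rw [h1, h2, div_le_div_iff₀ (by positivity) (by positivity)]
  have h3 : (A + t) ^ 2 ≤ 4 * ((A + q) ^ 2 + (A + (t - q)) ^ 2) := by
    nlinarith [sq_nonneg (2 * q - t), sq_nonneg A, mul_nonneg hA.le ht]
  exact mul_le_mul_of_nonneg_right h3 (by positivity)

/-- Convolution estimate in the weighted norm `‖F‖ = sup (A+|t|)^2 |F(t)| e^{-ν|t|}`
(restricted to Ω = [0,∞)): `‖F*G‖ ≤ (C/A)‖F‖‖G‖` for a universal constant `C`. -/
theorem convolution_weighted_norm_bound :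
    ∃ C : ℝ, 0 < C ∧
      ∀ (A ν MF MG : ℝ) (F G : ℝ → ℂ), 0 < A → 0 < ν →
        Continuous F → Continuous G →
        (∀ t : ℝ, 0 ≤ t → (A + |t|) ^ 2 * ‖F t‖ * Real.exp (-ν * |t|) ≤ MF) →
        (∀ t : ℝ, 0 ≤ t → (A + |t|) ^ 2 * ‖G t‖ * Real.exp (-ν * |t|) ≤ MG) →
        ∀ t : ℝ, 0 ≤ t →
          (A + |t|) ^ 2 * ‖∫ q in (0:ℝ)..t, F q * G (t - q)‖ * Real.exp (-ν * |t|)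
            ≤ C / A * MF * MG := by
  refine ⟨8, by norm_num, ?_⟩
  intro A ν MF MG F G hA hν hFc hGc hMF hMG t ht
  rw [abs_of_nonneg ht]
  have hMF0 : 0 ≤ MF := le_trans (by positivity) (hMF 0 le_rfl)
  have hMG0 : 0 ≤ MG := le_trans (by positivity) (hMG 0 le_rfl)
  have hAt : 0 < A + t := by linarith
  -- pointwise bounds on F and G
  have hFb : ∀ q : ℝ, 0 ≤ q → ‖F q‖ ≤ MF * Real.exp (ν * q) / (A + q) ^ 2 := by
    intro q hq
    have h := hMF q hq
    rw [abs_of_nonneg hq] at h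
    have h1 : 0 < (A + q) ^ 2 := by positivity
    rw [le_div_iff₀ h1]
    have he : Real.exp (-ν * q) * Real.exp (ν * q) = 1 := by
      rw [← Real.exp_add]; ring_nf; exact Real.exp_zero
    have key : ((A + q) ^ 2 * ‖F q‖ * Real.exp (-ν * q)) * Real.exp (ν * q)
        = ‖F q‖ * (A + q) ^ 2 := by
      rw [mul_assoc ((A + q) ^ 2 * ‖F q‖), he, mul_one, mul_comm]
    rw [← key]
    exact mul_le_mul_of_nonneg_right h (Real.exp_nonneg _)
  have hGb : ∀ q : ℝ, 0 ≤ q → ‖G q‖ ≤ MG * Real.exp (ν * q) / (A + q) ^ 2 := by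
    intro q hq
    have h := hMG q hq
    rw [abs_of_nonneg hq] at h
    have h1 : 0 < (A + q) ^ 2 := by positivity
    rw [le_div_iff₀ h1]
    have he : Real.exp (-ν * q) * Real.exp (ν * q) = 1 := by
      rw [← Real.exp_add]; ring_nf; exact Real.exp_zero
    have key : ((A + q) ^ 2 * ‖G q‖ * Real.exp (-ν * q)) * Real.exp (ν * q)
        = ‖G q‖ * (A + q) ^ 2 := by
      rw [mul_assoc ((A + q) ^ 2 * ‖G q‖), he, mul_one, mul_comm]
    rw [← key]
    exact mul_le_mul_of_nonneg_right h (Real.exp_nonneg _)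
  set c : ℝ := MF * MG * Real.exp (ν * t) * (4 / (A + t) ^ 2) with hc
  have hc0 : 0 ≤ c := by positivity
  -- pointwise bound on integrand
  have hpt : ∀ q ∈ Set.Icc (0:ℝ) t,
      ‖F q * G (t - q)‖ ≤ c * (((A + q) ^ 2)⁻¹ + ((A + (t - q)) ^ 2)⁻¹) := by
    intro q hq
    obtain ⟨hq0, hqt⟩ := hq
    have htq : 0 ≤ t - q := by linarith
    have ha : 0 < A + q := by linarith
    have hb : 0 < A + (t - q) := by linarith
    have h1 := hFb q hq0
    have h2 := hGb (t - q) htq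
    calc ‖F q * G (t - q)‖ = ‖F q‖ * ‖G (t - q)‖ := norm_mul _ _
      _ ≤ (MF * Real.exp (ν * q) / (A + q) ^ 2) *
            (MG * Real.exp (ν * (t - q)) / (A + (t - q)) ^ 2) := by
          apply mul_le_mul h1 h2 (norm_nonneg _) (by positivity)
      _ = MF * MG * Real.exp (ν * t) * ((A + q) ^ 2 * (A + (t - q)) ^ 2)⁻¹ := by
          have hE : Real.exp (ν * q) * Real.exp (ν * (t - q)) = Real.exp (ν * t) := by
            rw [← Real.exp_add]; congr 1; ring
          rw [← hE]
          field_simp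
      _ ≤ MF * MG * Real.exp (ν * t) *
            (4 / (A + t) ^ 2 * (((A + q) ^ 2)⁻¹ + ((A + (t - q)) ^ 2)⁻¹)) := by
          apply mul_le_mul_of_nonneg_left (key_kernel_bound A t q hA ht hq0 hqt)
          positivity
      _ = c * (((A + q) ^ 2)⁻¹ + ((A + (t - q)) ^ 2)⁻¹) := by rw [hc]; ring
  -- integrability
  have hi1 : IntervalIntegrable (fun q : ℝ => ‖F q * G (t - q)‖) volume 0 t := by
    apply Continuous.intervalIntegrable
    fun_prop
  have hia : IntervalIntegrable (fun q : ℝ => ((A + q) ^ 2)⁻¹) volume 0 t := by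
    apply ContinuousOn.intervalIntegrable
    apply ContinuousOn.inv₀
    · fun_prop
    · intro x hx
      rw [Set.uIcc_of_le ht] at hx
      have : 0 < A + x := by nlinarith [hx.1]
      positivity
  have hib : IntervalIntegrable (fun q : ℝ => ((A + (t - q)) ^ 2)⁻¹) volume 0 t := by
    apply ContinuousOn.intervalIntegrable
    apply ContinuousOn.inv₀
    · fun_prop
    · intro x hx
      rw [Set.uIcc_of_le ht] at hx
      have : 0 < A + (t - x) := by nlinarith [hx.2]
      positivity
  have hi2 : IntervalIntegrable
      (fun q : ℝ => c * (((A + q) ^ 2)⁻¹ + ((A + (t - q)) ^ 2)⁻¹)) volume 0 t :=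
    (hia.add hib).const_mul c
  -- compute the bound integral
  have hIb : ∫ q in (0:ℝ)..t, ((A + (t - q)) ^ 2)⁻¹ = A⁻¹ - (A + t)⁻¹ := by
    have := intervalIntegral.integral_comp_sub_left (fun x : ℝ => ((A + x) ^ 2)⁻¹) t
      (a := 0) (b := t)
    simp only [sub_self, sub_zero] at this
    rw [this, integral_inv_sq_shift A t hA ht]
  have hval : ∫ q in (0:ℝ)..t, c * (((A + q) ^ 2)⁻¹ + ((A + (t - q)) ^ 2)⁻¹)
      = c * (2 * (A⁻¹ - (A + t)⁻¹)) := by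
    rw [intervalIntegral.integral_const_mul, intervalIntegral.integral_add hia hib,
      integral_inv_sq_shift A t hA ht, hIb]
    ring
  -- combine
  have hnorm : ‖∫ q in (0:ℝ)..t, F q * G (t - q)‖
      ≤ c * (2 * (A⁻¹ - (A + t)⁻¹)) := by
    calc ‖∫ q in (0:ℝ)..t, F q * G (t - q)‖
        ≤ ∫ q in (0:ℝ)..t, ‖F q * G (t - q)‖ :=
          intervalIntegral.norm_integral_le_integral_norm ht
      _ ≤ ∫ q in (0:ℝ)..t, c * (((A + q) ^ 2)⁻¹ + ((A + (t - q)) ^ 2)⁻¹) := by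
          apply intervalIntegral.integral_mono_on ht hi1 hi2
          exact hpt
      _ = c * (2 * (A⁻¹ - (A + t)⁻¹)) := hval
  have hsub : A⁻¹ - (A + t)⁻¹ ≤ A⁻¹ := by
    have : 0 < (A + t)⁻¹ := by positivity
    linarith
  have hcn : c * (2 * (A⁻¹ - (A + t)⁻¹)) ≤ c * (2 * A⁻¹) := by
    apply mul_le_mul_of_nonneg_left _ hc0
    linarith
  have hfinal : ‖∫ q in (0:ℝ)..t, F q * G (t - q)‖ ≤ c * (2 * A⁻¹) :=
    le_trans hnorm hcn
  have hexp : Real.exp (ν * t) * Real.exp (-ν * t) = 1 := by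
    rw [← Real.exp_add]; ring_nf; exact Real.exp_zero
  calc (A + t) ^ 2 * ‖∫ q in (0:ℝ)..t, F q * G (t - q)‖ * Real.exp (-ν * t)
      ≤ (A + t) ^ 2 * (c * (2 * A⁻¹)) * Real.exp (-ν * t) := by
        apply mul_le_mul_of_nonneg_right _ (Real.exp_nonneg _)
        exact mul_le_mul_of_nonneg_left hfinal (by positivity)
    _ = 8 / A * MF * MG * (Real.exp (ν * t) * Real.exp (-ν * t)) := by
        rw [hc]; field_simp; ring
    _ = 8 / A * MF * MG := by rw [hexp, mul_one]
end

section
/- Let X be the Banach space of continuous functions F : [0,∞)² → ℂ with finite norm ‖F‖_ν = sup_{(s,t)} |F(s,t)| e^{-ν t}. Let V : ℝ → ℂ be continuous with ∫_ℝ |V| < ∞. Define J(F)(s,t) = t - (1/4)∫₀ᵗ ∫_t^s V((s₁-t₁)/2) F(s₁,t₁) ds₁ dt₁. Then ‖J(F) - J(G)‖_ν ≤ (C/ν) ‖F-G‖_ν with C depending only on ∫|V|, so J is a contraction on X for ν large enough, and hence the integral equation Φ = J(Φ) has a unique solution Φ ∈ X. -/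
open MeasureTheory Real Set

/-- The integral operator `J(F)(s,t) = t - (1/4)∫₀ᵗ∫_t^s V((s₁-t₁)/2) F(s₁,t₁) ds₁ dt₁`. -/
noncomputable def Jop (V : ℝ → ℂ) (F : ℝ × ℝ → ℂ) : ℝ × ℝ → ℂ :=
  fun p => (p.2 : ℂ) -
    (1 / 4 : ℂ) * ∫ t₁ in (0:ℝ)..p.2, ∫ s₁ in p.2..p.1, V ((s₁ - t₁) / 2) * F (s₁, t₁)

namespace JopAux

noncomputable def pr (p : ℝ × ℝ) : ℝ × ℝ := (max p.1 0, max p.2 0)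

lemma continuous_pr : Continuous pr := by unfold pr; fun_prop

lemma pr_mem (p : ℝ × ℝ) : 0 ≤ (pr p).1 ∧ 0 ≤ (pr p).2 := by
  constructor <;> simp [pr]

lemma pr_eq {p : ℝ × ℝ} (h1 : 0 ≤ p.1) (h2 : 0 ≤ p.2) : pr p = p := by
  simp [pr, max_eq_left h1, max_eq_left h2]

lemma Jop_congr (V : ℝ → ℂ) {F G : ℝ × ℝ → ℂ}
    (h : ∀ q : ℝ × ℝ, 0 ≤ q.1 → 0 ≤ q.2 → F q = G q)
    {s t : ℝ} (hs : 0 ≤ s) (ht : 0 ≤ t) :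
    Jop V F (s, t) = Jop V G (s, t) := by
  unfold Jop
  simp only
  congr 2
  apply intervalIntegral.integral_congr
  intro t₁ ht₁
  apply intervalIntegral.integral_congr
  intro s₁ hs₁
  have h2 : 0 ≤ t₁ := le_trans (le_min le_rfl ht) ht₁.1
  have h1 : 0 ≤ s₁ := le_trans (le_min ht hs) hs₁.1
  simp only [h (s₁, t₁) h1 h2]

lemma Jop_zero (V : ℝ → ℂ) (p : ℝ × ℝ) : Jop V (fun _ => 0) p = (p.2 : ℂ) := by
  simp [Jop]

variable {V : ℝ → ℂ}

lemma Vint (hVi : Integrable V) (c : ℝ) : Integrable (fun x => ‖V ((x - c) / 2)‖) :=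
  ((hVi.norm.comp_div two_ne_zero).comp_sub_right c)

lemma abs_intV_le (hVi : Integrable V) (a b c : ℝ) :
    |∫ x in a..b, ‖V ((x - c) / 2)‖| ≤ 2 * ∫ x, ‖V x‖ := by
  have hW := Vint hVi c
  rw [intervalIntegral.abs_intervalIntegral_eq,
    abs_of_nonneg (setIntegral_nonneg measurableSet_uIoc (fun x _ => norm_nonneg _))]
  calc ∫ x in Set.uIoc a b, ‖V ((x - c) / 2)‖ ≤ ∫ x, ‖V ((x - c) / 2)‖ :=
        setIntegral_le_integral hW (Filter.Eventually.of_forall fun x => norm_nonneg _)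
    _ = ∫ y, ‖V (y / 2)‖ := integral_sub_right_eq_self (fun y => ‖V (y / 2)‖) c
    _ = 2 * ∫ x, ‖V x‖ := by
        rw [MeasureTheory.Measure.integral_comp_div (fun y => ‖V y‖) 2]; norm_num

/-- The constant in the contraction estimate. -/
noncomputable def Cc (V : ℝ → ℂ) : ℝ := (∫ x, ‖V x‖) / 2 + 1

lemma Cc_pos (V : ℝ → ℂ) : 0 < Cc V := by
  have : 0 ≤ ∫ x, ‖V x‖ := integral_nonneg fun x => norm_nonneg _
  unfold Cc; linarith

lemma key (hVc : Continuous V) (hVi : Integrable V)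
    {ν : ℝ} (hν : 0 < ν) (F G : ℝ × ℝ → ℂ) (M : ℝ)
    (hF : Continuous F) (hG : Continuous G)
    (hb : ∀ s t : ℝ, 0 ≤ s → 0 ≤ t → ‖F (s, t) - G (s, t)‖ ≤ M * Real.exp (ν * t))
    {s t : ℝ} (hs : 0 ≤ s) (ht : 0 ≤ t) :
    ‖Jop V F (s, t) - Jop V G (s, t)‖ ≤ Cc V / ν * M * Real.exp (ν * t) := by
  unfold Cc
  obtain ⟨cV, hcV⟩ : ∃ c, (∫ x, ‖V x‖) = c := ⟨_, rfl⟩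
  rw [hcV]
  have hcV0 : 0 ≤ cV := hcV ▸ integral_nonneg fun x => norm_nonneg _
  have hM : 0 ≤ M := by
    have h := hb 0 0 le_rfl le_rfl
    rw [mul_zero, Real.exp_zero, mul_one] at h
    exact le_trans (norm_nonneg _) h
  set A : ℝ → ℂ := fun t₁ => ∫ s₁ in t..s, V ((s₁ - t₁) / 2) * F (s₁, t₁) with hA
  set B : ℝ → ℂ := fun t₁ => ∫ s₁ in t..s, V ((s₁ - t₁) / 2) * G (s₁, t₁) with hB
  have hVF : Continuous (Function.uncurry fun (t₁ s₁ : ℝ) => V ((s₁ - t₁) / 2) * F (s₁, t₁)) := by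
    apply Continuous.mul
    · exact hVc.comp (by fun_prop)
    · exact hF.comp (by fun_prop)
  have hVG : Continuous (Function.uncurry fun (t₁ s₁ : ℝ) => V ((s₁ - t₁) / 2) * G (s₁, t₁)) := by
    apply Continuous.mul
    · exact hVc.comp (by fun_prop)
    · exact hG.comp (by fun_prop)
  have hAc : Continuous A :=
    intervalIntegral.continuous_parametric_intervalIntegral_of_continuous' hVF t s
  have hBc : Continuous B :=
    intervalIntegral.continuous_parametric_intervalIntegral_of_continuous' hVG t s
  have hdiff : Jop V F (s, t) - Jop V G (s, t)
      = (1 / 4 : ℂ) * ∫ t₁ in (0:ℝ)..t, (B t₁ - A t₁) := by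
    rw [intervalIntegral.integral_sub (hBc.intervalIntegrable 0 t) (hAc.intervalIntegrable 0 t)]
    simp only [Jop]
    ring
  rw [hdiff]
  rw [norm_mul]
  have h14 : ‖(1 / 4 : ℂ)‖ = 1 / 4 := by norm_num
  rw [h14]
  -- bound the outer integral
  have hbd : ∀ t₁ ∈ Set.uIoc (0:ℝ) t, ‖B t₁ - A t₁‖ ≤ 2 * cV * M * Real.exp (ν * t₁) := by
    intro t₁ ht₁
    have ht₁0 : 0 ≤ t₁ := by
      rcases Set.mem_uIoc.mp ht₁ with h | h
      · exact h.1.le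
      · exact le_trans ht h.1.le
    have hIGc : Continuous fun s₁ : ℝ => V ((s₁ - t₁) / 2) * G (s₁, t₁) :=
      (hVc.comp (by fun_prop)).mul (hG.comp (by fun_prop))
    have hIFc : Continuous fun s₁ : ℝ => V ((s₁ - t₁) / 2) * F (s₁, t₁) :=
      (hVc.comp (by fun_prop)).mul (hF.comp (by fun_prop))
    have hsub : B t₁ - A t₁ = ∫ s₁ in t..s, V ((s₁ - t₁) / 2) * (G (s₁, t₁) - F (s₁, t₁)) := by
      show (∫ s₁ in t..s, V ((s₁ - t₁) / 2) * G (s₁, t₁))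
          - (∫ s₁ in t..s, V ((s₁ - t₁) / 2) * F (s₁, t₁)) = _
      rw [← intervalIntegral.integral_sub (hIGc.intervalIntegrable t s)
        (hIFc.intervalIntegrable t s)]
      exact intervalIntegral.integral_congr fun x _ => by ring
    rw [hsub]
    have hIb : ‖∫ s₁ in t..s, V ((s₁ - t₁) / 2) * (G (s₁, t₁) - F (s₁, t₁))‖
        ≤ |∫ s₁ in t..s, ‖V ((s₁ - t₁) / 2)‖ * (M * Real.exp (ν * t₁))| := by
      apply intervalIntegral.norm_integral_le_abs_of_norm_le
      · apply (ae_restrict_iff' measurableSet_uIoc).mpr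
        apply Filter.Eventually.of_forall
        intro s₁ hs₁
        have hs₁0 : 0 ≤ s₁ := by
          rcases Set.mem_uIoc.mp hs₁ with h | h
          · exact le_trans ht h.1.le
          · exact le_trans hs h.1.le
        rw [norm_mul]
        gcongr
        rw [norm_sub_rev]
        exact hb s₁ t₁ hs₁0 ht₁0
      · apply Continuous.intervalIntegrable
        exact ((hVc.comp (by fun_prop)).norm.mul continuous_const)
    refine hIb.trans ?_
    rw [intervalIntegral.integral_mul_const, abs_mul]
    rw [abs_of_nonneg (by positivity : (0:ℝ) ≤ M * Real.exp (ν * t₁))]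
    have := hcV ▸ abs_intV_le hVi t s t₁
    calc |∫ s₁ in t..s, ‖V ((s₁ - t₁) / 2)‖| * (M * Real.exp (ν * t₁))
        ≤ (2 * cV) * (M * Real.exp (ν * t₁)) := by gcongr
      _ = 2 * cV * M * Real.exp (ν * t₁) := by ring
  have houter : ‖∫ t₁ in (0:ℝ)..t, (B t₁ - A t₁)‖
      ≤ |∫ t₁ in (0:ℝ)..t, 2 * cV * M * Real.exp (ν * t₁)| := by
    apply intervalIntegral.norm_integral_le_abs_of_norm_le
    · exact (ae_restrict_iff' measurableSet_uIoc).mpr (Filter.Eventually.of_forall hbd)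
    · apply Continuous.intervalIntegrable; fun_prop
  have hexp : ∫ t₁ in (0:ℝ)..t, Real.exp (ν * t₁) = ν⁻¹ * (Real.exp (ν * t) - 1) := by
    rw [intervalIntegral.integral_comp_mul_left (fun x => Real.exp x) (ne_of_gt hν)]
    rw [integral_exp]
    simp [smul_eq_mul]
  have hval : ∫ t₁ in (0:ℝ)..t, 2 * cV * M * Real.exp (ν * t₁)
      = 2 * cV * M * (ν⁻¹ * (Real.exp (ν * t) - 1)) := by
    rw [intervalIntegral.integral_const_mul, hexp]
  rw [hval] at houter
  have hexp1 : 1 ≤ Real.exp (ν * t) := Real.one_le_exp (by positivity)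
  have habs : |2 * cV * M * (ν⁻¹ * (Real.exp (ν * t) - 1))|
      = 2 * cV * M * (ν⁻¹ * (Real.exp (ν * t) - 1)) := by
    apply abs_of_nonneg
    have h1 : (0:ℝ) ≤ Real.exp (ν * t) - 1 := by linarith
    have h2 : (0:ℝ) ≤ ν⁻¹ := by positivity
    exact mul_nonneg (mul_nonneg (mul_nonneg (by norm_num : (0:ℝ) ≤ 2) hcV0) hM)
      (mul_nonneg h2 h1)
  rw [habs] at houter
  calc (1:ℝ)/4 * ‖∫ t₁ in (0:ℝ)..t, (B t₁ - A t₁)‖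
      ≤ 1/4 * (2 * cV * M * (ν⁻¹ * (Real.exp (ν * t) - 1))) := by gcongr
    _ ≤ (cV / 2 + 1) / ν * M * Real.exp (ν * t) := by
        rw [div_eq_mul_inv (cV / 2 + 1) ν]
        have hν' : 0 ≤ ν⁻¹ := by positivity
        have hE : 0 < Real.exp (ν * t) := Real.exp_pos _
        nlinarith [mul_nonneg (mul_nonneg hcV0 hM) hν',
          mul_nonneg hM (le_of_lt hE), mul_nonneg hν' (mul_nonneg hM hE.le)]

lemma Jop_continuous (hVc : Continuous V) {F : ℝ × ℝ → ℂ}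
    (hF : Continuous F) : Continuous (Jop V F) := by
  have hH : ∀ t₁ : ℝ, Continuous fun s₁ : ℝ => V ((s₁ - t₁) / 2) * F (s₁, t₁) := fun t₁ =>
    (hVc.comp (by fun_prop)).mul (hF.comp (by fun_prop))
  have hPc : Continuous fun q : ℝ × ℝ => ∫ s₁ in (0:ℝ)..q.2, V ((s₁ - q.1) / 2) * F (s₁, q.1) :=
    intervalIntegral.continuous_parametric_primitive_of_continuous
      (f := fun (t₁ s₁ : ℝ) => V ((s₁ - t₁) / 2) * F (s₁, t₁))
      ((hVc.comp (by fun_prop)).mul (hF.comp (by fun_prop)))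
  have hsplit : ∀ (a b t₁ : ℝ), (∫ s₁ in a..b, V ((s₁ - t₁) / 2) * F (s₁, t₁))
      = (∫ s₁ in (0:ℝ)..b, V ((s₁ - t₁) / 2) * F (s₁, t₁))
        - ∫ s₁ in (0:ℝ)..a, V ((s₁ - t₁) / 2) * F (s₁, t₁) := fun a b t₁ =>
    (intervalIntegral.integral_interval_sub_left ((hH t₁).intervalIntegrable 0 b)
      ((hH t₁).intervalIntegrable 0 a)).symm
  have hmain : Continuous fun p : ℝ × ℝ => ∫ t₁ in (0:ℝ)..p.2,
      ((∫ s₁ in (0:ℝ)..p.1, V ((s₁ - t₁) / 2) * F (s₁, t₁))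
        - ∫ s₁ in (0:ℝ)..p.2, V ((s₁ - t₁) / 2) * F (s₁, t₁)) := by
    have h1 : Continuous fun x : (ℝ × ℝ) × ℝ =>
        ∫ s₁ in (0:ℝ)..x.1.1, V ((s₁ - x.2) / 2) * F (s₁, x.2) :=
      by simpa [Function.comp_def] using
        hPc.comp (show Continuous fun x : (ℝ × ℝ) × ℝ => (x.2, x.1.1) by fun_prop)
    have h2 : Continuous fun x : (ℝ × ℝ) × ℝ =>
        ∫ s₁ in (0:ℝ)..x.1.2, V ((s₁ - x.2) / 2) * F (s₁, x.2) :=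
      by simpa [Function.comp_def] using
        hPc.comp (show Continuous fun x : (ℝ × ℝ) × ℝ => (x.2, x.1.2) by fun_prop)
    have hf : Continuous (Function.uncurry fun (p : ℝ × ℝ) (t₁ : ℝ) =>
        (∫ s₁ in (0:ℝ)..p.1, V ((s₁ - t₁) / 2) * F (s₁, t₁))
          - ∫ s₁ in (0:ℝ)..p.2, V ((s₁ - t₁) / 2) * F (s₁, t₁)) := h1.sub h2
    exact intervalIntegral.continuous_parametric_intervalIntegral_of_continuous hf continuous_snd
  have heq : (fun p : ℝ × ℝ => ∫ t₁ in (0:ℝ)..p.2,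
        ∫ s₁ in p.2..p.1, V ((s₁ - t₁) / 2) * F (s₁, t₁))
      = fun p : ℝ × ℝ => ∫ t₁ in (0:ℝ)..p.2,
        ((∫ s₁ in (0:ℝ)..p.1, V ((s₁ - t₁) / 2) * F (s₁, t₁))
          - ∫ s₁ in (0:ℝ)..p.2, V ((s₁ - t₁) / 2) * F (s₁, t₁)) :=
    funext fun p => intervalIntegral.integral_congr fun t₁ _ => hsplit p.2 p.1 t₁
  unfold Jop
  apply Continuous.sub
  · fun_prop
  · apply Continuous.mul continuous_const
    rw [heq]
    exact hmain

/-- lift a bounded continuous function on the plane to the exponentially weighted function. -/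
noncomputable def liftQ (ν : ℝ) (g : BoundedContinuousFunction (ℝ × ℝ) ℂ) : ℝ × ℝ → ℂ :=
  fun q => g (pr q) * ((Real.exp (ν * (pr q).2) : ℝ) : ℂ)

lemma liftQ_continuous (ν : ℝ) (g : BoundedContinuousFunction (ℝ × ℝ) ℂ) :
    Continuous (liftQ ν g) := by
  unfold liftQ
  apply Continuous.mul
  · exact g.continuous.comp continuous_pr
  · exact Complex.continuous_ofReal.comp
      (Real.continuous_exp.comp (continuous_const.mul (continuous_snd.comp continuous_pr)))

lemma liftQ_apply (ν : ℝ) (g : BoundedContinuousFunction (ℝ × ℝ) ℂ)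
    {s t : ℝ} (hs : 0 ≤ s) (ht : 0 ≤ t) :
    liftQ ν g (s, t) = g (s, t) * ((Real.exp (ν * t) : ℝ) : ℂ) := by
  unfold liftQ
  rw [pr_eq (p := (s, t)) hs ht]

end JopAux

open JopAux in
/-- `J` is a `C/ν`-Lipschitz (hence contractive for large `ν`) map in the weighted norm
`‖F‖_ν = sup |F(s,t)|e^{-νt}` on continuous exponentially bounded functions on the
quadrant, and the equation `Φ = J(Φ)` has a unique such solution. -/
theorem Jop_contraction_and_fixed_point (V : ℝ → ℂ)
    (hVc : Continuous V) (hVi : Integrable V) :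
    ∃ C : ℝ, 0 < C ∧
      (∀ ν : ℝ, 0 < ν → ∀ (F G : ℝ × ℝ → ℂ) (M : ℝ),
        ContinuousOn F (Ici 0 ×ˢ Ici 0) → ContinuousOn G (Ici 0 ×ˢ Ici 0) →
        (∀ s t : ℝ, 0 ≤ s → 0 ≤ t → ‖F (s, t) - G (s, t)‖ ≤ M * Real.exp (ν * t)) →
        ∀ s t : ℝ, 0 ≤ s → 0 ≤ t →
          ‖Jop V F (s, t) - Jop V G (s, t)‖ ≤ C / ν * M * Real.exp (ν * t)) ∧
      (∃ ν₀ : ℝ, ∀ ν : ℝ, ν₀ ≤ ν →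
        ∃ Φ : ℝ × ℝ → ℂ,
          ContinuousOn Φ (Ici 0 ×ˢ Ici 0) ∧
          (∃ M : ℝ, ∀ s t : ℝ, 0 ≤ s → 0 ≤ t → ‖Φ (s, t)‖ ≤ M * Real.exp (ν * t)) ∧
          (∀ s t : ℝ, 0 ≤ s → 0 ≤ t → Φ (s, t) = Jop V Φ (s, t)) ∧
          (∀ Φ' : ℝ × ℝ → ℂ,
            ContinuousOn Φ' (Ici 0 ×ˢ Ici 0) →
            (∃ M : ℝ, ∀ s t : ℝ, 0 ≤ s → 0 ≤ t → ‖Φ' (s, t)‖ ≤ M * Real.exp (ν * t)) →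
            (∀ s t : ℝ, 0 ≤ s → 0 ≤ t → Φ' (s, t) = Jop V Φ' (s, t)) →
            ∀ s t : ℝ, 0 ≤ s → 0 ≤ t → Φ' (s, t) = Φ (s, t))) := by
  have hprmem : ∀ p : ℝ × ℝ, pr p ∈ (Ici (0:ℝ)) ×ˢ (Ici (0:ℝ)) := fun p =>
    Set.mem_prod.mpr ⟨(pr_mem p).1, (pr_mem p).2⟩
  -- Part 1 : the contraction estimate
  have hpart1 : ∀ ν : ℝ, 0 < ν → ∀ (F G : ℝ × ℝ → ℂ) (M : ℝ),
      ContinuousOn F (Ici 0 ×ˢ Ici 0) → ContinuousOn G (Ici 0 ×ˢ Ici 0) →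
      (∀ s t : ℝ, 0 ≤ s → 0 ≤ t → ‖F (s, t) - G (s, t)‖ ≤ M * Real.exp (ν * t)) →
      ∀ s t : ℝ, 0 ≤ s → 0 ≤ t →
        ‖Jop V F (s, t) - Jop V G (s, t)‖ ≤ Cc V / ν * M * Real.exp (ν * t) := by
    intro ν hν F G M hFc hGc hb s t hs ht
    have hF'c : Continuous (F ∘ pr) := hFc.comp_continuous continuous_pr hprmem
    have hG'c : Continuous (G ∘ pr) := hGc.comp_continuous continuous_pr hprmem
    have hFq : ∀ q : ℝ × ℝ, 0 ≤ q.1 → 0 ≤ q.2 → F q = (F ∘ pr) q := fun q h1 h2 => by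
      simp [Function.comp, pr_eq h1 h2]
    have hGq : ∀ q : ℝ × ℝ, 0 ≤ q.1 → 0 ≤ q.2 → G q = (G ∘ pr) q := fun q h1 h2 => by
      simp [Function.comp, pr_eq h1 h2]
    rw [Jop_congr V hFq hs ht, Jop_congr V hGq hs ht]
    apply key hVc hVi hν (F ∘ pr) (G ∘ pr) M hF'c hG'c _ hs ht
    intro a b ha hb'
    have : pr (a, b) = (a, b) := pr_eq (p := (a, b)) ha hb'
    simpa [Function.comp, this] using hb a b ha hb'
  refine ⟨Cc V, Cc_pos V, hpart1, 2 * Cc V + 1, ?_⟩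
  intro ν hν
  have hC0 : 0 < Cc V := Cc_pos V
  have hν1 : 1 ≤ ν := by linarith
  have hνpos : 0 < ν := by linarith
  have hCν : Cc V / ν ≤ 1 / 2 := by
    rw [div_le_div_iff₀ hνpos (by norm_num)]
    linarith
  -- the contraction operator on bounded continuous functions
  have hTc : ∀ g : BoundedContinuousFunction (ℝ × ℝ) ℂ, Continuous fun p : ℝ × ℝ =>
      Jop V (liftQ ν g) (pr p) * ((Real.exp (-(ν * (pr p).2)) : ℝ) : ℂ) := by
    intro g
    apply Continuous.mul
    · exact (Jop_continuous hVc (liftQ_continuous ν g)).comp continuous_pr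
    · exact Complex.continuous_ofReal.comp (Real.continuous_exp.comp
        ((continuous_const.mul (continuous_snd.comp continuous_pr)).neg))
  have hJb : ∀ g : BoundedContinuousFunction (ℝ × ℝ) ℂ, ∀ s t : ℝ, 0 ≤ s → 0 ≤ t →
      ‖Jop V (liftQ ν g) (s, t)‖ ≤ t + Cc V / ν * ‖g‖ * Real.exp (ν * t) := by
    intro g s t hs ht
    have hz : ∀ a b : ℝ, 0 ≤ a → 0 ≤ b →
        ‖liftQ ν g (a, b) - (fun _ => (0:ℂ)) (a, b)‖ ≤ ‖g‖ * Real.exp (ν * b) := by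
      intro a b ha hb
      rw [liftQ_apply ν g ha hb]
      rw [sub_zero, norm_mul, Complex.norm_real, Real.norm_eq_abs,
        abs_of_pos (Real.exp_pos _)]
      gcongr
      exact g.norm_coe_le_norm (a, b)
    have hkey := key hVc hVi hνpos (liftQ ν g) (fun _ => 0) ‖g‖
      (liftQ_continuous ν g) continuous_const hz hs ht
    rw [Jop_zero V (s, t)] at hkey
    have htr : ‖Jop V (liftQ ν g) (s, t)‖
        ≤ ‖Jop V (liftQ ν g) (s, t) - ((t : ℝ) : ℂ)‖ + ‖((t : ℝ) : ℂ)‖ := by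
      simpa using norm_add_le (Jop V (liftQ ν g) (s, t) - ((t : ℝ) : ℂ)) ((t : ℝ) : ℂ)
    have hnt : ‖((t : ℝ) : ℂ)‖ = t := by
      rw [Complex.norm_real, Real.norm_eq_abs, abs_of_nonneg ht]
    rw [hnt] at htr
    linarith
  have hTb : ∀ g : BoundedContinuousFunction (ℝ × ℝ) ℂ, ∀ p : ℝ × ℝ,
      ‖Jop V (liftQ ν g) (pr p) * ((Real.exp (-(ν * (pr p).2)) : ℝ) : ℂ)‖
        ≤ 1 + Cc V * ‖g‖ := by
    intro g p
    obtain ⟨hs, ht⟩ := pr_mem p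
    set s := (pr p).1
    set t := (pr p).2
    have hE : 0 < Real.exp (ν * t) := Real.exp_pos _
    rw [norm_mul, Complex.norm_real, Real.norm_eq_abs, abs_of_pos (Real.exp_pos _),
      Real.exp_neg]
    have h1 : ‖Jop V (liftQ ν g) (pr p)‖ ≤ t + Cc V / ν * ‖g‖ * Real.exp (ν * t) := by
      have := hJb g s t hs ht
      simpa using this
    have ht' : t ≤ Real.exp (ν * t) := by
      have := Real.add_one_le_exp (ν * t)
      nlinarith
    have hCC : Cc V / ν ≤ Cc V := div_le_self hC0.le hν1
    rw [← div_eq_mul_inv, div_le_iff₀ hE]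
    have h2 : Cc V / ν * ‖g‖ * Real.exp (ν * t) ≤ Cc V * ‖g‖ * Real.exp (ν * t) := by
      have := mul_le_mul_of_nonneg_right hCC (norm_nonneg g)
      exact mul_le_mul_of_nonneg_right this hE.le
    calc ‖Jop V (liftQ ν g) (pr p)‖ ≤ t + Cc V / ν * ‖g‖ * Real.exp (ν * t) := h1
      _ ≤ Real.exp (ν * t) + Cc V * ‖g‖ * Real.exp (ν * t) := by linarith
      _ = (1 + Cc V * ‖g‖) * Real.exp (ν * t) := by ring
  set T : BoundedContinuousFunction (ℝ × ℝ) ℂ → BoundedContinuousFunction (ℝ × ℝ) ℂ :=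
    fun g => BoundedContinuousFunction.ofNormedAddCommGroup
      (fun p : ℝ × ℝ => Jop V (liftQ ν g) (pr p) * ((Real.exp (-(ν * (pr p).2)) : ℝ) : ℂ))
      (hTc g) (1 + Cc V * ‖g‖) (hTb g) with hT
  have hTapp : ∀ g p, T g p = Jop V (liftQ ν g) (pr p) * ((Real.exp (-(ν * (pr p).2)) : ℝ) : ℂ) :=
    fun g p => rfl
  -- contraction property
  have hlip : ∀ g g', dist (T g) (T g') ≤ (1 / 2 : ℝ) * dist g g' := by
    intro g g'
    rw [BoundedContinuousFunction.dist_le (by positivity)]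
    intro p
    obtain ⟨hs, ht⟩ := pr_mem p
    set s := (pr p).1
    set t := (pr p).2
    have hE : 0 < Real.exp (ν * t) := Real.exp_pos _
    rw [dist_eq_norm, hTapp, hTapp, ← sub_mul, norm_mul, Complex.norm_real,
      Real.norm_eq_abs, abs_of_pos (Real.exp_pos _), Real.exp_neg]
    have hd : ∀ a b : ℝ, 0 ≤ a → 0 ≤ b →
        ‖liftQ ν g (a, b) - liftQ ν g' (a, b)‖ ≤ dist g g' * Real.exp (ν * b) := by
      intro a b ha hb
      rw [liftQ_apply ν g ha hb, liftQ_apply ν g' ha hb, ← sub_mul, norm_mul,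
        Complex.norm_real, Real.norm_eq_abs, abs_of_pos (Real.exp_pos _)]
      gcongr
      rw [← dist_eq_norm]
      exact BoundedContinuousFunction.dist_coe_le_dist (a, b)
    have hkey := key hVc hVi hνpos (liftQ ν g) (liftQ ν g') (dist g g')
      (liftQ_continuous ν g) (liftQ_continuous ν g') hd hs ht
    have hJd : ‖Jop V (liftQ ν g) (pr p) - Jop V (liftQ ν g') (pr p)‖
        ≤ Cc V / ν * dist g g' * Real.exp (ν * t) := by simpa using hkey
    rw [← div_eq_mul_inv, div_le_iff₀ hE]
    calc ‖Jop V (liftQ ν g) (pr p) - Jop V (liftQ ν g') (pr p)‖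
        ≤ Cc V / ν * dist g g' * Real.exp (ν * t) := hJd
      _ ≤ 1 / 2 * dist g g' * Real.exp (ν * t) := by
          gcongr
  have hcontr : ContractingWith (1/2 : NNReal) T := by
    constructor
    · rw [← NNReal.coe_lt_coe]; norm_num
    · apply LipschitzWith.of_dist_le_mul
      intro g g'
      have := hlip g g'
      calc dist (T g) (T g') ≤ (1 / 2 : ℝ) * dist g g' := this
        _ = ((1/2 : NNReal) : ℝ) * dist g g' := by norm_num
  set g := ContractingWith.fixedPoint T hcontr with hg
  have hfix : T g = g := ContractingWith.fixedPoint_isFixedPt hcontr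
  set Φ : ℝ × ℝ → ℂ := liftQ ν g with hΦ
  have hΦc : ContinuousOn Φ (Ici 0 ×ˢ Ici 0) := (liftQ_continuous ν g).continuousOn
  have hΦb : ∀ s t : ℝ, 0 ≤ s → 0 ≤ t → ‖Φ (s, t)‖ ≤ ‖g‖ * Real.exp (ν * t) := by
    intro s t hs ht
    rw [hΦ, liftQ_apply ν g hs ht, norm_mul, Complex.norm_real, Real.norm_eq_abs,
      abs_of_pos (Real.exp_pos _)]
    gcongr
    exact g.norm_coe_le_norm (s, t)
  have hΦfix : ∀ s t : ℝ, 0 ≤ s → 0 ≤ t → Φ (s, t) = Jop V Φ (s, t) := by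
    intro s t hs ht
    have h1 : Φ (s, t) = g (s, t) * ((Real.exp (ν * t) : ℝ) : ℂ) := liftQ_apply ν g hs ht
    have h2 : g (s, t) = T g (s, t) := by rw [hfix]
    rw [h1, h2, hTapp, pr_eq (p := (s, t)) hs ht]
    have : ((Real.exp (-(ν * t)) : ℝ) : ℂ) * ((Real.exp (ν * t) : ℝ) : ℂ) = 1 := by
      rw [← Complex.ofReal_mul, ← Real.exp_add]
      norm_num
    rw [mul_assoc, this, mul_one]
  refine ⟨Φ, hΦc, ⟨‖g‖, hΦb⟩, hΦfix, ?_⟩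
  -- uniqueness
  intro Φ' hΦ'c hΦ'b hΦ'fix s t hs ht
  obtain ⟨M', hM'⟩ := hΦ'b
  have hstep : ∀ n : ℕ, ∀ a b : ℝ, 0 ≤ a → 0 ≤ b →
      ‖Φ' (a, b) - Φ (a, b)‖ ≤ (Cc V / ν) ^ n * (M' + ‖g‖) * Real.exp (ν * b) := by
    intro n
    induction n with
    | zero =>
      intro a b ha hb
      rw [pow_zero, one_mul]
      calc ‖Φ' (a, b) - Φ (a, b)‖ ≤ ‖Φ' (a, b)‖ + ‖Φ (a, b)‖ := norm_sub_le _ _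
        _ ≤ M' * Real.exp (ν * b) + ‖g‖ * Real.exp (ν * b) :=
            add_le_add (hM' a b ha hb) (hΦb a b ha hb)
        _ = (M' + ‖g‖) * Real.exp (ν * b) := by ring
    | succ n ih =>
      intro a b ha hb
      rw [hΦ'fix a b ha hb, hΦfix a b ha hb]
      have := hpart1 ν hνpos Φ' Φ ((Cc V / ν) ^ n * (M' + ‖g‖)) hΦ'c hΦc
        (fun u v hu hv => ih u v hu hv) a b ha hb
      calc ‖Jop V Φ' (a, b) - Jop V Φ (a, b)‖
          ≤ Cc V / ν * ((Cc V / ν) ^ n * (M' + ‖g‖)) * Real.exp (ν * b) := this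
        _ = (Cc V / ν) ^ (n + 1) * (M' + ‖g‖) * Real.exp (ν * b) := by ring
  have h0 : (0:ℝ) ≤ Cc V / ν := by positivity
  have hlt : Cc V / ν < 1 := lt_of_le_of_lt hCν (by norm_num)
  have htend : Filter.Tendsto (fun n : ℕ => (Cc V / ν) ^ n * (M' + ‖g‖) * Real.exp (ν * t))
      Filter.atTop (nhds 0) := by
    have h := tendsto_pow_atTop_nhds_zero_of_lt_one h0 hlt
    have := (h.mul_const (M' + ‖g‖)).mul_const (Real.exp (ν * t))
    simpa using this
  have hle0 : ‖Φ' (s, t) - Φ (s, t)‖ ≤ 0 :=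
    ge_of_tendsto' htend (fun n => hstep n s t hs ht)
  have := norm_le_zero_iff.mp hle0
  exact sub_eq_zero.mp this
end
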